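/- In the two-curve setting below, suppose C₂ε² ≤ C₁/2 and C₁ε² ≤ 1. Then for all 1 ≤ i < j ≤ n and for every real number δ (an arbitrary estimate of the intrinsic distance), max{|δ − d_{M₁}(x_i, x_j)|, |δ − d_{M₂}(x_i, x_j)|} ≥ (C₁/8)·ε²·max{d_{M₁}(x_i, x_j), d_{M₂}(x_i, x_j)}. That is, no estimator based only on the common sample points x₁,…,x_n can achieve relative error better than order ε² simultaneously for M₁ and M₂. -/

import Mathlib

open Set
open scoped ENNReal NNReal

/-- The intrinsic distance on a set `A`: the infimum of the lengths (total variations) of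
continuous curves `γ : [0,1] → A` joining the two points, in `[0,∞]`. -/
noncomputable def intrinsicDist {E : Type*} [PseudoEMetricSpace E] (A : Set E) (x x' : E) :
    ℝ≥0∞ :=
  sInf {L | ∃ γ : ℝ → E, ContinuousOn γ (Icc 0 1) ∧ MapsTo γ (Icc 0 1) A ∧
    γ 0 = x ∧ γ 1 = x' ∧ L = eVariationOn γ (Icc 0 1)}

/-- The point `(x, y) ∈ ℝ²` (as `EuclideanSpace ℝ (Fin 2)`). -/
noncomputable def pt2 (x y : ℝ) : EuclideanSpace ℝ (Fin 2) :=
  (WithLp.equiv 2 (Fin 2 → ℝ)).symm ![x, y]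

/-- The tri-cube function `w(t) = (1 − |t|³)₊³`. -/
noncomputable def triCube (t : ℝ) : ℝ := (max (1 - |t| ^ 3) 0) ^ 3


lemma hasDerivAt_maxcube (x : ℝ) : HasDerivAt (fun x : ℝ => max x 0 ^ 3) (3 * max x 0 ^ 2) x := by
  rcases lt_trichotomy x 0 with hx | hx | hx
  · have h0 : HasDerivAt (fun _ : ℝ => (0:ℝ)) 0 x := hasDerivAt_const x 0
    have he : (fun y : ℝ => max y 0 ^ 3) =ᶠ[nhds x] fun _ => (0:ℝ) := by
      filter_upwards [eventually_lt_nhds hx] with y hy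
      rw [max_eq_right hy.le]; ring
    have := h0.congr_of_eventuallyEq he
    refine this.congr_deriv ?_
    rw [max_eq_right hx.le]; ring
  · subst hx
    rw [hasDerivAt_iff_isLittleO_nhds_zero]
    have hsimp : ∀ h : ℝ, (0 + h) ⊔ 0 ^ 3 = h ⊔ 0 := by intro h; norm_num
    rw [Asymptotics.isLittleO_iff]
    intro c hc
    filter_upwards [Metric.eventually_nhds_iff.2 ⟨Real.sqrt c, Real.sqrt_pos.2 hc,
      fun {y} hy => hy⟩] with h hh
    have h1 : |max h 0| ≤ |h| := by
      rcases le_total h 0 with h' | h'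
      · rw [max_eq_right h']; simp
      · rw [max_eq_left h']
    have h2 : |h| < Real.sqrt c := by simpa [Real.dist_eq] using hh
    have key : ‖max (0 + h) 0 ^ 3 - (max (0:ℝ) 0 ^ 3 + h • (3 * max (0:ℝ) 0 ^ 2))‖ = |max h 0|^3 := by
      simp [abs_pow]
    have hb : |max h 0|^3 ≤ c * ‖h‖ := by
      have e1 : |max h 0|^3 ≤ |h|^2 * |h| := by
        have := pow_le_pow_left₀ (abs_nonneg _) h1 3
        nlinarith [this]
      have e2 : |h|^2 ≤ c := by nlinarith [Real.sq_sqrt hc.le, abs_nonneg h, h2.le]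
      rw [Real.norm_eq_abs]
      nlinarith [abs_nonneg h]
    calc ‖max ((0:ℝ) + h) 0 ^ 3 - max (0:ℝ) 0 ^ 3 - h • (3 * max (0:ℝ) 0 ^ 2)‖
        = |max h 0|^3 := by simp [abs_pow]
      _ ≤ c * ‖h‖ := hb
  · have h0 := hasDerivAt_pow 3 x
    have he : (fun y : ℝ => max y 0 ^ 3) =ᶠ[nhds x] fun y => y ^ 3 := by
      filter_upwards [eventually_gt_nhds hx] with y hy
      rw [max_eq_left hy.le]
    have := h0.congr_of_eventuallyEq he
    refine this.congr_deriv ?_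
    rw [max_eq_left hx.le]; push_cast; ring

noncomputable def tcd (t : ℝ) : ℝ := -9 * t * |t| * (max (1 - |t| ^ 3) 0) ^ 2

lemma hasDerivAt_abs_cube (x : ℝ) : HasDerivAt (fun t : ℝ => |t| ^ 3) (3 * x * |x|) x := by
  have he : (fun t : ℝ => |t| ^ 3) = fun t : ℝ => max t 0 ^ 3 + max (-t) 0 ^ 3 := by
    funext t
    rcases le_total t 0 with h | h
    · rw [max_eq_right h, max_eq_left (by linarith), abs_of_nonpos h]; ring
    · rw [max_eq_left h, max_eq_right (by linarith), abs_of_nonneg h]; ring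
  rw [he]
  have h1 := hasDerivAt_maxcube x
  have h2 := (hasDerivAt_maxcube (-x)).comp x (hasDerivAt_neg x)
  have := h1.add h2
  refine this.congr_deriv ?_
  rcases le_total x 0 with h | h
  · rw [max_eq_right h, max_eq_left (by linarith), abs_of_nonpos h]; ring
  · rw [max_eq_left h, max_eq_right (by linarith), abs_of_nonneg h]; ring

lemma hasDerivAt_triCube (x : ℝ) : HasDerivAt triCube (tcd x) x := by
  have hinner := (hasDerivAt_const x 1).sub (hasDerivAt_abs_cube x)
  have houter := hasDerivAt_maxcube (1 - |x| ^ 3)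
  have := houter.comp x hinner
  refine this.congr_deriv ?_
  unfold tcd; ring

lemma deriv_triCube : deriv triCube = tcd := by
  funext x; exact (hasDerivAt_triCube x).deriv

lemma continuous_tcd : Continuous tcd := by
  unfold tcd
  fun_prop

lemma tcd_abs_le (x : ℝ) : |tcd x| ≤ 9 / 4 := by
  unfold tcd
  rcases le_or_gt 1 (|x|) with h | h
  · have hm : max (1 - |x| ^ 3) 0 = 0 := by
      rw [max_eq_right]
      have := one_le_pow₀ (n := 3) h
      linarith
    rw [hm]
    norm_num
  · have h0 : (0:ℝ) ≤ |x| := abs_nonneg x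
    have hm : max (1 - |x| ^ 3) 0 = 1 - |x| ^ 3 := by
      rw [max_eq_left]
      have := pow_le_one₀ h0 h.le (n := 3)
      linarith
    rw [hm, abs_mul, abs_mul, abs_mul]
    have e1 : |(-9 : ℝ)| = 9 := by norm_num
    rw [e1, abs_abs, abs_sq]
    set s := |x| with hs
    have h1 : s ^ 3 ≤ 1 := pow_le_one₀ h0 h.le
    have h2 : s - s^4 ≤ 1/2 := by
      nlinarith [sq_nonneg (s - 63/100), sq_nonneg (s^2 + (63/100)*s - 3/5), sq_nonneg (s^2 - 2/5), sq_nonneg s, sq_nonneg (s-1)]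
    have h3 : 0 ≤ s * (1 - s^3) := by nlinarith
    have key : s * s * (1 - s^3)^2 ≤ 1/4 := by nlinarith [sq_nonneg (s*(1-s^3))]
    nlinarith

lemma tcd_neg (t : ℝ) : tcd (-t) = - tcd t := by
  unfold tcd; rw [abs_neg]; ring

lemma tcd_on_unit {t : ℝ} (h0 : 0 ≤ t) (h1 : t ≤ 1) :
    tcd t = -9 * t * t * (1 - t^3)^2 := by
  unfold tcd
  rw [abs_of_nonneg h0, max_eq_left (by nlinarith [pow_le_one₀ h0 h1 (n := 3)])]

lemma integral_tcd_sq : ∫ t in (-1:ℝ)..1, (tcd t)^2 = 19683/6545 := by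
  have hc : Continuous fun t : ℝ => (tcd t)^2 := continuous_tcd.pow 2
  have hsplit := intervalIntegral.integral_add_adjacent_intervals
    (a := (-1:ℝ)) (b := 0) (c := 1) (μ := MeasureTheory.volume)
    (hc.intervalIntegrable _ _) (hc.intervalIntegrable _ _)
  have hneg : ∫ t in (0:ℝ)..1, (tcd (-t))^2 = ∫ t in (-1:ℝ)..(-0:ℝ), (tcd t)^2 :=
    intervalIntegral.integral_comp_neg fun t => (tcd t)^2
  have heven : ∫ t in (0:ℝ)..1, (tcd (-t))^2 = ∫ t in (0:ℝ)..1, (tcd t)^2 := by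
    congr 1; funext t; rw [tcd_neg]; ring
  have hmain : ∫ t in (0:ℝ)..1, (tcd t)^2 = 19683/13090 := by
    have hEq : EqOn (fun t : ℝ => (tcd t)^2)
        (fun t : ℝ => 81*(t^4 - 4*t^7 + 6*t^10 - 4*t^13 + t^16)) (uIcc 0 1) := by
      intro t ht
      rw [uIcc_of_le (by norm_num)] at ht
      simp only
      rw [tcd_on_unit ht.1 ht.2]; ring
    rw [intervalIntegral.integral_congr hEq]
    have hF : ∀ t : ℝ, HasDerivAt
        (fun t : ℝ => 81*(t^5/5 - 4*(t^8/8) + 6*(t^11/11) - 4*(t^14/14) + t^17/17))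
        (81*(t^4 - 4*t^7 + 6*t^10 - 4*t^13 + t^16)) t := by
      intro t
      have H := (((((hasDerivAt_pow 5 t).div_const 5).sub
        (HasDerivAt.const_mul (4:ℝ) ((hasDerivAt_pow 8 t).div_const 8))).add
        (HasDerivAt.const_mul (6:ℝ) ((hasDerivAt_pow 11 t).div_const 11))).sub
        (HasDerivAt.const_mul (4:ℝ) ((hasDerivAt_pow 14 t).div_const 14))).add
        ((hasDerivAt_pow 17 t).div_const 17)
      have H2 := HasDerivAt.const_mul (81:ℝ) H
      refine H2.congr_deriv ?_
      push_cast; ring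
    rw [intervalIntegral.integral_eq_sub_of_hasDerivAt (fun t _ => hF t)
      (by apply Continuous.intervalIntegrable; fun_prop)]
    norm_num
  norm_num at hneg
  rw [← hsplit, ← hneg, heven, hmain]
  norm_num

lemma integral_tcd_pow4 : ∫ t in (-1:ℝ)..1, (tcd t)^4 = 486/55 := by
  have hc : Continuous fun t : ℝ => (tcd t)^4 := continuous_tcd.pow 4
  have hsplit := intervalIntegral.integral_add_adjacent_intervals
    (a := (-1:ℝ)) (b := 0) (c := 1) (μ := MeasureTheory.volume)
    (hc.intervalIntegrable _ _) (hc.intervalIntegrable _ _)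
  have hneg : ∫ t in (0:ℝ)..1, (tcd (-t))^4 = ∫ t in (-1:ℝ)..(-0:ℝ), (tcd t)^4 :=
    intervalIntegral.integral_comp_neg fun t => (tcd t)^4
  have heven : ∫ t in (0:ℝ)..1, (tcd (-t))^4 = ∫ t in (0:ℝ)..1, (tcd t)^4 := by
    congr 1; funext t; rw [tcd_neg]; ring
  have hmain : ∫ t in (0:ℝ)..1, (tcd t)^4 = 243/55 := by
    have hEq : EqOn (fun t : ℝ => (tcd t)^4)
        (fun t : ℝ => 6561*(t^8 - 8*t^11 + 28*t^14 - 56*t^17 + 70*t^20 - 56*t^23 + 28*t^26 - 8*t^29 + t^32)) (uIcc 0 1) := by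
      intro t ht
      rw [uIcc_of_le (by norm_num)] at ht
      simp only
      rw [tcd_on_unit ht.1 ht.2]; ring
    rw [intervalIntegral.integral_congr hEq]
    have hF : ∀ t : ℝ, HasDerivAt
        (fun t : ℝ => 6561*(t^9/9 - 8*(t^12/12) + 28*(t^15/15) - 56*(t^18/18) + 70*(t^21/21) - 56*(t^24/24) + 28*(t^27/27) - 8*(t^30/30) + t^33/33))
        (6561*(t^8 - 8*t^11 + 28*t^14 - 56*t^17 + 70*t^20 - 56*t^23 + 28*t^26 - 8*t^29 + t^32)) t := by
      intro t
      have H := (((((((((hasDerivAt_pow 9 t).div_const 9).sub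
        (HasDerivAt.const_mul (8:ℝ) ((hasDerivAt_pow 12 t).div_const 12))).add
        (HasDerivAt.const_mul (28:ℝ) ((hasDerivAt_pow 15 t).div_const 15))).sub
        (HasDerivAt.const_mul (56:ℝ) ((hasDerivAt_pow 18 t).div_const 18))).add
        (HasDerivAt.const_mul (70:ℝ) ((hasDerivAt_pow 21 t).div_const 21))).sub
        (HasDerivAt.const_mul (56:ℝ) ((hasDerivAt_pow 24 t).div_const 24))).add
        (HasDerivAt.const_mul (28:ℝ) ((hasDerivAt_pow 27 t).div_const 27))).sub
        (HasDerivAt.const_mul (8:ℝ) ((hasDerivAt_pow 30 t).div_const 30))).add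
        ((hasDerivAt_pow 33 t).div_const 33)
      have H2 := HasDerivAt.const_mul (6561:ℝ) H
      refine H2.congr_deriv ?_
      push_cast; ring
    rw [intervalIntegral.integral_eq_sub_of_hasDerivAt (fun t _ => hF t)
      (by apply Continuous.intervalIntegrable; fun_prop)]
    norm_num
  norm_num at hneg
  rw [← hsplit, ← hneg, heven, hmain]
  norm_num

lemma pt2_apply_zero (x y : ℝ) : pt2 x y 0 = x := rfl
lemma pt2_apply_one (x y : ℝ) : pt2 x y 1 = y := rfl

lemma dist_pt2 (a b c d : ℝ) : dist (pt2 a b) (pt2 c d) = Real.sqrt ((a-c)^2 + (b-d)^2) := by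
  rw [EuclideanSpace.dist_eq]
  simp [pt2, Fin.sum_univ_two, Real.dist_eq, sq_abs]

lemma triCube_lipschitz (a b : ℝ) : |triCube a - triCube b| ≤ 9/4 * |a - b| := by
  have hdiff : Differentiable ℝ triCube := fun x => (hasDerivAt_triCube x).differentiableAt
  have hbound : ∀ x : ℝ, ‖deriv triCube x‖₊ ≤ ((9:ℝ≥0)/4) := by
    intro x
    rw [← NNReal.coe_le_coe]
    have : deriv triCube x = tcd x := (hasDerivAt_triCube x).deriv
    simp only [coe_nnnorm, Real.norm_eq_abs, this]
    calc |tcd x| ≤ 9/4 := tcd_abs_le x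
      _ = ((9:ℝ≥0)/4 : ℝ≥0) := by norm_num
  have hlip := lipschitzWith_of_nnnorm_deriv_le hdiff hbound
  have := hlip.dist_le_mul a b
  rw [Real.dist_eq, Real.dist_eq] at this
  calc |triCube a - triCube b| ≤ ((9:ℝ≥0)/4 : ℝ≥0) * |a - b| := this
    _ = 9/4 * |a - b| := by norm_num

lemma evar_le_of_lip {E : Type*} [PseudoMetricSpace E] {f : ℝ → E} {C : ℝ} (hC : 0 ≤ C)
    (h : ∀ a ∈ Icc (0:ℝ) 1, ∀ b ∈ Icc (0:ℝ) 1, dist (f a) (f b) ≤ C * dist a b) :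
    eVariationOn f (Icc 0 1) ≤ ENNReal.ofReal C := by
  have hlip : LipschitzOnWith C.toNNReal f (Icc 0 1) := by
    rw [lipschitzOnWith_iff_dist_le_mul]
    intro x hx y hy
    calc dist (f x) (f y) ≤ C * dist x y := h x hx y hy
      _ = C.toNNReal * dist x y := by rw [Real.coe_toNNReal _ hC]
  have hid : eVariationOn id (Icc (0:ℝ) 1) ≤ ENNReal.ofReal 1 := by
    have := MonotoneOn.eVariationOn_le (f := fun x : ℝ => x) (s := Icc (0:ℝ) 1)
      (fun x _ y _ hxy => hxy) (left_mem_Icc.2 zero_le_one) (right_mem_Icc.2 zero_le_one)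
    simpa using this
  calc eVariationOn f (Icc 0 1) = eVariationOn (f ∘ id) (Icc 0 1) := rfl
    _ ≤ C.toNNReal * eVariationOn id (Icc 0 1) := hlip.comp_eVariationOn_le (mapsTo_id _)
    _ ≤ C.toNNReal * ENNReal.ofReal 1 := by gcongr
    _ = ENNReal.ofReal C := by rw [ENNReal.ofReal_one, mul_one]; rfl

lemma triCube_eq_zero {x : ℝ} (h : 1 ≤ |x|) : triCube x = 0 := by
  unfold triCube
  rw [max_eq_right (by nlinarith [one_le_pow₀ (n := 3) h])]
  ring

lemma triCube_zero : triCube 0 = 1 := by unfold triCube; norm_num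



/-- The bump-train function `g(t) = A(ε/2)²·Σ_{i=1}^{n−1} w((t − (i−1/2)ε)/(ε/2))`. -/
noncomputable def bumpTrain (A ε : ℝ) (n : ℕ) (t : ℝ) : ℝ :=
  A * (ε / 2) ^ 2 * ∑ i ∈ Finset.range (n - 1), triCube ((t - ((i : ℝ) + 1 / 2) * ε) / (ε / 2))

lemma bumpTrain_grid {A ε : ℝ} {n : ℕ} (hε : ε ≠ 0) (k : ℕ) :
    bumpTrain A ε n ((k:ℝ) * ε) = 0 := by
  unfold bumpTrain
  rw [Finset.sum_eq_zero, mul_zero]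
  intro i _
  have harg : ((k:ℝ)*ε - ((i:ℝ)+1/2)*ε)/(ε/2) = 2*((k:ℝ)-(i:ℝ)) - 1 := by
    field_simp; ring
  rw [harg]
  apply triCube_eq_zero
  rcases le_or_gt k i with h | h
  · have : (k:ℝ) ≤ (i:ℝ) := Nat.cast_le.2 h
    rw [abs_of_nonpos (by linarith)]; linarith
  · have : (i:ℝ) + 1 ≤ (k:ℝ) := by exact_mod_cast Nat.succ_le_of_lt h
    rw [abs_of_nonneg (by linarith)]; linarith

lemma bumpTrain_mid {A ε : ℝ} {n : ℕ} (hε : ε ≠ 0) (k : ℕ) (hk : k < n - 1) :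
    bumpTrain A ε n (((k:ℝ) + 1/2) * ε) = A * (ε/2)^2 := by
  unfold bumpTrain
  rw [Finset.sum_eq_single_of_mem k (Finset.mem_range.2 hk)]
  · have harg : (((k:ℝ)+1/2)*ε - ((k:ℝ)+1/2)*ε)/(ε/2) = 0 := by
      rw [sub_self, zero_div]
    rw [harg, triCube_zero, mul_one]
  · intro i _ hne
    have harg : (((k:ℝ)+1/2)*ε - ((i:ℝ)+1/2)*ε)/(ε/2) = 2*((k:ℝ)-(i:ℝ)) := by
      field_simp; ring
    rw [harg]
    apply triCube_eq_zero
    rcases lt_or_gt_of_ne (fun hc => hne (by exact_mod_cast hc) : (i:ℝ) ≠ (k:ℝ)) with h | h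
    · have : (i:ℝ) + 1 ≤ (k:ℝ) := by
        have : i < k := by exact_mod_cast h
        exact_mod_cast Nat.succ_le_of_lt this
      rw [abs_of_nonneg (by linarith)]; linarith
    · have : (k:ℝ) + 1 ≤ (i:ℝ) := by
        have : k < i := by exact_mod_cast h
        exact_mod_cast Nat.succ_le_of_lt this
      rw [abs_of_nonpos (by linarith)]; linarith


lemma aux_u0_bound {A ε : ℝ} (hA : 0 < A) (hε : 0 < ε)
    (h : 243/7040*A^4*ε^2 ≤ 19683/104720*A^2/2) : A^2*ε^2 ≤ 324/119 := by
  nlinarith [mul_pos hA hA, mul_pos hε hε, sq_nonneg (A*ε)]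

lemma aux_key {u r : ℝ} (hu0 : 0 ≤ u) (hule : u ≤ 324/119) (hr1 : 1 ≤ r)
    (hr2 : r^2 = 1 + u/4) : 1 ≤ (1 - 19683/418880*u)*r := by
  have h1 : 0 < 1 - 19683/418880*u := by linarith
  have h2 : (1:ℝ) ≤ ((1 - 19683/418880*u)*r)^2 := by
    have he : ((1 - 19683/418880*u)*r)^2 = (1 - 19683/418880*u)^2*(1+u/4) := by
      rw [mul_pow, hr2]
    rw [he]
    nlinarith [mul_nonneg (mul_nonneg hu0 hu0) hu0,
      mul_nonneg (sub_nonneg.2 hule) hu0, sq_nonneg u]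
  nlinarith [h1, hr1, h2]


set_option maxHeartbeats 2000000 in
/-- In the two-curve setting, if `C₂ε² ≤ C₁/2` and `C₁ε² ≤ 1`, then for all
`1 ≤ i < j ≤ n` and every real estimate `δ`,
`max{|δ − d_{M₁}(x_i,x_j)|, |δ − d_{M₂}(x_i,x_j)|} ≥ (C₁/8)ε²·max{d_{M₁}, d_{M₂}}`:
no estimator based on the common sample points beats relative error of order `ε²`. -/
theorem two_curve_minimax_lower_bound (A : ℝ) (hA : 0 < A) (n : ℕ) (hn : 2 ≤ n)
    (ε : ℝ) (hε : ε = 1 / ((n : ℝ) - 1))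
    (M₁ M₂ : Set (EuclideanSpace ℝ (Fin 2)))
    (hM₁ : M₁ = {p | ∃ t ∈ Icc (0 : ℝ) 1, p = pt2 t 0})
    (hM₂ : M₂ = {p | ∃ t ∈ Icc (0 : ℝ) 1, p = pt2 t (bumpTrain A ε n t)})
    (x : ℕ → EuclideanSpace ℝ (Fin 2)) (hx : ∀ i, x i = pt2 (((i : ℝ) - 1) * ε) 0)
    (C₁ : ℝ) (hC₁ : C₁ = A ^ 2 / 16 * ∫ t in (-1 : ℝ)..1, (deriv triCube t) ^ 2)
    (C₂ : ℝ) (hC₂ : C₂ = A ^ 4 / 256 * ∫ t in (-1 : ℝ)..1, (deriv triCube t) ^ 4)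
    (hsmall₁ : C₂ * ε ^ 2 ≤ C₁ / 2) (hsmall₂ : C₁ * ε ^ 2 ≤ 1)
    (i j : ℕ) (hi : 1 ≤ i) (hij : i < j) (hj : j ≤ n) (δ : ℝ) :
    C₁ / 8 * ε ^ 2 *
        max (intrinsicDist M₁ (x i) (x j)).toReal (intrinsicDist M₂ (x i) (x j)).toReal ≤
      max |δ - (intrinsicDist M₁ (x i) (x j)).toReal|
        |δ - (intrinsicDist M₂ (x i) (x j)).toReal| := by

  -- basic positivity facts
  have hn1 : (1:ℝ) ≤ (n:ℝ) - 1 := by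
    have : (2:ℝ) ≤ (n:ℝ) := by exact_mod_cast hn
    linarith
  have hεpos : 0 < ε := by rw [hε]; positivity
  have hεne : ε ≠ 0 := ne_of_gt hεpos
  have hεn : ((n:ℝ) - 1) * ε = 1 := by
    rw [hε]; field_simp
  set m : ℕ := j - i with hm
  have hm1 : 1 ≤ m := by omega
  have hmcast : (m:ℝ) = (j:ℝ) - (i:ℝ) := by
    rw [hm, Nat.cast_sub hij.le]
  have hicast : ((i - 1 : ℕ) : ℝ) = (i:ℝ) - 1 := by
    rw [Nat.cast_sub hi]; norm_num
  have hjcast : ((j - 1 : ℕ) : ℝ) = (j:ℝ) - 1 := by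
    rw [Nat.cast_sub (by omega)]; norm_num
  set a : ℝ := ((i:ℝ) - 1) * ε with ha
  set L : ℝ := (m:ℝ) * ε with hL
  have hi1 : (1:ℝ) ≤ (i:ℝ) := by exact_mod_cast hi
  have hjn : (j:ℝ) ≤ (n:ℝ) := by exact_mod_cast hj
  have ha0 : 0 ≤ a := by
    apply mul_nonneg _ hεpos.le
    linarith
  have hL0 : 0 < L := by
    apply mul_pos _ hεpos
    exact_mod_cast hm1
  have haL : a + L ≤ 1 := by
    have : a + L = ((j:ℝ) - 1) * ε := by rw [ha, hL, hmcast]; ring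
    rw [this, ← hεn]
    apply mul_le_mul_of_nonneg_right _ hεpos.le
    linarith
  have sqrt_le_abs_add : ∀ p q : ℝ, Real.sqrt (p^2 + q^2) ≤ |p| + |q| := by
    intro p q
    rw [show |p| + |q| = Real.sqrt ((|p| + |q|)^2) from
      (Real.sqrt_sq (by positivity)).symm]
    apply Real.sqrt_le_sqrt
    nlinarith [mul_nonneg (abs_nonneg p) (abs_nonneg q), sq_abs p, sq_abs q]
  -- Part 1 : upper bound for M₁
  have hM1up : intrinsicDist M₁ (x i) (x j) ≤ ENNReal.ofReal L := by
    set γ₁ : ℝ → EuclideanSpace ℝ (Fin 2) := fun u => pt2 (a + u * L) 0 with hγ₁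
    have hdist : ∀ u v : ℝ, dist (γ₁ u) (γ₁ v) = L * dist u v := by
      intro u v
      rw [hγ₁, dist_pt2,
        show (a + u*L - (a + v*L))^2 + ((0:ℝ)-0)^2 = (L * (u-v))^2 by ring,
        Real.sqrt_sq_eq_abs, abs_mul, abs_of_nonneg hL0.le, Real.dist_eq]
    have hcont : Continuous γ₁ := by
      have : LipschitzWith L.toNNReal γ₁ :=
        LipschitzWith.of_dist_le_mul (fun u v => by
          rw [hdist u v, Real.coe_toNNReal _ hL0.le])
      exact this.continuous
    have hmaps : MapsTo γ₁ (Icc 0 1) M₁ := by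
      intro u hu
      rw [hM₁]
      refine ⟨a + u * L, ⟨?_, ?_⟩, rfl⟩
      · have : 0 ≤ u * L := mul_nonneg hu.1 hL0.le
        linarith
      · have : u * L ≤ L := by
          nlinarith [hu.2, hL0.le]
        linarith
    have he0 : γ₁ 0 = x i := by
      rw [hγ₁, hx i]
      norm_num [ha]
    have he1 : γ₁ 1 = x j := by
      rw [hγ₁, hx j]
      congr 1
      rw [hL, hmcast, ha]; ring
    have hmem : eVariationOn γ₁ (Icc 0 1) ∈
        {Lv | ∃ γ : ℝ → EuclideanSpace ℝ (Fin 2), ContinuousOn γ (Icc 0 1) ∧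
          MapsTo γ (Icc 0 1) M₁ ∧ γ 0 = x i ∧ γ 1 = x j ∧ Lv = eVariationOn γ (Icc 0 1)} :=
      ⟨γ₁, hcont.continuousOn, hmaps, he0, he1, rfl⟩
    exact sInf_le_of_le hmem (evar_le_of_lip hL0.le
      (fun u _ v _ => le_of_eq (hdist u v)))
    -- g abbreviation
  set g : ℝ → ℝ := fun t => bumpTrain A ε n t with hg
  -- Lipschitz bound for g
  set Kg : ℝ := 9/8 * A * ε * (n:ℝ) with hKg
  have hKg0 : 0 ≤ Kg := by
    rw [hKg]
    have : (0:ℝ) ≤ (n:ℝ) := Nat.cast_nonneg n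
    positivity
  have hgLip : ∀ s t : ℝ, |g s - g t| ≤ Kg * |s - t| := by
    intro s t
    set S := ∑ k ∈ Finset.range (n - 1),
        (triCube ((s - ((k:ℝ) + 1/2) * ε) / (ε/2)) -
         triCube ((t - ((k:ℝ) + 1/2) * ε) / (ε/2))) with hS
    have hsplit : g s - g t = A * (ε/2)^2 * S := by
      rw [hS, hg]
      unfold bumpTrain
      rw [Finset.sum_sub_distrib]
      ring
    have hsum : |S| ≤ ((n - 1 : ℕ):ℝ) * (9/4 * (|s - t| / (ε/2))) := by
      rw [hS]
      refine le_trans (Finset.abs_sum_le_sum_abs _ _) ?_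
      rw [show ((n - 1 : ℕ):ℝ) * (9/4 * (|s - t| / (ε/2))) =
        ∑ _k ∈ Finset.range (n-1), (9/4 * (|s - t| / (ε/2))) by
          rw [Finset.sum_const, Finset.card_range, nsmul_eq_mul]]
      apply Finset.sum_le_sum
      intro k _
      have h2 := triCube_lipschitz ((s - ((k:ℝ) + 1/2) * ε) / (ε/2))
        ((t - ((k:ℝ) + 1/2) * ε) / (ε/2))
      have harg : (s - ((k:ℝ) + 1/2) * ε) / (ε/2) - (t - ((k:ℝ) + 1/2) * ε) / (ε/2)
          = (s - t) / (ε/2) := by field_simp; ring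
      rw [harg] at h2
      refine h2.trans (le_of_eq ?_)
      rw [abs_div, abs_of_pos (by linarith : (0:ℝ) < ε/2)]
    have hAe : |A * (ε/2)^2| = A * (ε/2)^2 := abs_of_pos (by positivity)
    rw [hsplit, abs_mul, hAe]
    have step1 : A * (ε/2)^2 * |S| ≤
        A * (ε/2)^2 * (((n - 1 : ℕ):ℝ) * (9/4 * (|s - t| / (ε/2)))) :=
      mul_le_mul_of_nonneg_left hsum (by positivity)
    refine step1.trans ?_
    have heq : A * (ε/2)^2 * (((n - 1 : ℕ):ℝ) * (9/4 * (|s - t| / (ε/2)))) =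
        9/8 * A * ε * ((n-1:ℕ):ℝ) * |s - t| := by
      field_simp; ring
    rw [heq, hKg]
    apply mul_le_mul_of_nonneg_right _ (abs_nonneg _)
    have hle : ((n-1:ℕ):ℝ) ≤ (n:ℝ) := by exact_mod_cast Nat.sub_le n 1
    nlinarith [hεpos, hA]
  -- values of g at grid and mid points
  have hga : g a = 0 := by
    rw [hg, ha, ← hicast]
    exact bumpTrain_grid hεne (i-1)
  have hgb : g (a + L) = 0 := by
    have : a + L = ((j-1:ℕ):ℝ) * ε := by rw [ha, hL, hmcast, hjcast]; ring
    rw [hg, this]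
    exact bumpTrain_grid hεne (j-1)
  -- Part 2 : upper bound for M₂
  have hM2up : intrinsicDist M₂ (x i) (x j) ≤ ENNReal.ofReal (L * (1 + Kg)) := by
    set γ₂ : ℝ → EuclideanSpace ℝ (Fin 2) := fun u => pt2 (a + u * L) (g (a + u * L)) with hγ₂
    have hdist : ∀ u v : ℝ, dist (γ₂ u) (γ₂ v) ≤ (L * (1 + Kg)) * dist u v := by
      intro u v
      rw [hγ₂, dist_pt2]
      calc Real.sqrt ((a + u*L - (a + v*L))^2 + (g (a + u*L) - g (a + v*L))^2)
          ≤ |a + u*L - (a + v*L)| + |g (a + u*L) - g (a + v*L)| := sqrt_le_abs_add _ _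
        _ ≤ |L * (u - v)| + Kg * |a + u*L - (a + v*L)| := by
            have h1 : |a + u*L - (a + v*L)| = |L * (u-v)| := by ring_nf
            have h2 := hgLip (a + u*L) (a + v*L)
            rw [h1]
            linarith [h2, h1 ▸ h2]
        _ = (L * (1 + Kg)) * dist u v := by
            rw [show a + u*L - (a + v*L) = L * (u - v) by ring, Real.dist_eq,
              abs_mul, abs_of_nonneg hL0.le]
            ring
    have hcont : Continuous γ₂ := by
      have : LipschitzWith (L * (1 + Kg)).toNNReal γ₂ :=
        LipschitzWith.of_dist_le_mul (fun u v => by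
          rw [Real.coe_toNNReal _ (by positivity)]
          exact hdist u v)
      exact this.continuous
    have hmaps : MapsTo γ₂ (Icc 0 1) M₂ := by
      intro u hu
      rw [hM₂]
      refine ⟨a + u * L, ⟨?_, ?_⟩, rfl⟩
      · have : 0 ≤ u * L := mul_nonneg hu.1 hL0.le
        linarith
      · have : u * L ≤ L := by nlinarith [hu.2, hL0.le]
        linarith
    have he0 : γ₂ 0 = x i := by
      rw [hγ₂, hx i]
      simp only [zero_mul, add_zero]
      rw [hga]
    have he1 : γ₂ 1 = x j := by
      rw [hγ₂, hx j]
      simp only [one_mul]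
      rw [hgb]
      congr 1
      rw [hL, hmcast, ha]; ring
    have hmem : eVariationOn γ₂ (Icc 0 1) ∈
        {Lv | ∃ γ : ℝ → EuclideanSpace ℝ (Fin 2), ContinuousOn γ (Icc 0 1) ∧
          MapsTo γ (Icc 0 1) M₂ ∧ γ 0 = x i ∧ γ 1 = x j ∧ Lv = eVariationOn γ (Icc 0 1)} :=
      ⟨γ₂, hcont.continuousOn, hmaps, he0, he1, rfl⟩
    exact sInf_le_of_le hmem (evar_le_of_lip (by positivity)
      (fun u _ v _ => hdist u v))
  classical
  -- values of g on the grid and at midpoints, relative to a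
  have hgval : ∀ q : ℕ, g (a + (q:ℝ) * ε) = 0 := by
    intro q
    have hcast : a + (q:ℝ)*ε = ((i-1+q:ℕ):ℝ)*ε := by
      push_cast [Nat.cast_sub hi]
      rw [ha]; ring
    rw [hg, hcast]
    exact bumpTrain_grid hεne (i-1+q)
  have hgmid : ∀ q : ℕ, q < m → g (a + (q:ℝ)*ε + ε/2) = A*(ε/2)^2 := by
    intro q hq
    have hcast : a + (q:ℝ)*ε + ε/2 = (((i-1+q:ℕ):ℝ) + 1/2)*ε := by
      push_cast [Nat.cast_sub hi]
      rw [ha]; ring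
    rw [hg, hcast]
    exact bumpTrain_mid hεne (i-1+q) (by omega)
  have hr0 : Real.sqrt ((ε/2)^2 + (A*(ε/2)^2)^2) = (ε/2) * Real.sqrt (1 + (A*ε/2)^2) := by
    rw [show (ε/2)^2 + (A*(ε/2)^2)^2 = (ε/2)^2 * (1 + (A*ε/2)^2) by ring,
      Real.sqrt_mul (by positivity), Real.sqrt_sq (by positivity)]
  -- Part 3 : lower bound for M₂
  have hM2low : ENNReal.ofReal (L * Real.sqrt (1 + (A*ε/2)^2)) ≤
      intrinsicDist M₂ (x i) (x j) := by
    apply le_sInf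
    rintro Lv ⟨γ, hcont, hmaps, hγ0, hγ1, rfl⟩
    set N := 2*m with hN
    set tk : ℕ → ℝ := fun k => a + (k:ℝ)*(ε/2) with htk
    set φ : ℝ → ℝ := fun v => γ v 0 with hφ
    have hφcont : ContinuousOn φ (Icc 0 1) :=
      (EuclideanSpace.proj (0 : Fin 2)).continuous.comp_continuousOn hcont
    have hchar : ∀ v ∈ Icc (0:ℝ) 1, φ v ∈ Icc (0:ℝ) 1 ∧ γ v = pt2 (φ v) (g (φ v)) := by
      intro v hv
      have hmem := hmaps hv
      rw [hM₂] at hmem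
      obtain ⟨t, ht, heq⟩ := hmem
      have hft : φ v = t := by rw [hφ]; simp only; rw [heq]; rfl
      rw [hft]
      exact ⟨ht, heq⟩
    have hφ0 : φ 0 = a := by
      rw [hφ]; simp only; rw [hγ0, hx i]; rfl
    have hφ1 : φ 1 = a + L := by
      have hkey : ((j:ℝ)-1)*ε = a + L := by rw [ha, hL, hmcast]; ring
      rw [hφ]; simp only; rw [hγ1, hx j, pt2_apply_zero, hkey]
    -- construct the monotone chain
    let u : ℕ → ℝ := fun k => Nat.rec (motive := fun _ => ℝ) 0
      (fun k' uk => if h : ∃ v ∈ Icc uk 1, φ v = tk (k'+1) then h.choose else uk) k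
    have hu0 : u 0 = 0 := rfl
    have hu_succ : ∀ k, u (k+1) =
        if h : ∃ v ∈ Icc (u k) 1, φ v = tk (k+1) then h.choose else u k := fun k => rfl
    have hustep : ∀ k, u k ≤ u (k+1) := by
      intro k
      rw [hu_succ k]
      split_ifs with h
      · exact h.choose_spec.1.1
      · exact le_rfl
    have humono : Monotone u := monotone_nat_of_le_succ hustep
    have hu01 : ∀ k, u k ∈ Icc (0:ℝ) 1 := by
      intro k
      induction k with
      | zero => exact ⟨le_refl 0, zero_le_one⟩
      | succ k ih =>
        rw [hu_succ k]
        split_ifs with h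
        · exact ⟨ih.1.trans h.choose_spec.1.1, h.choose_spec.1.2⟩
        · exact ih
    have htkmono : ∀ k : ℕ, tk k ≤ tk (k+1) := by
      intro k
      rw [htk]
      simp only
      push_cast
      nlinarith [hεpos]
    have hφu : ∀ k, k ≤ N → φ (u k) = tk k := by
      intro k
      induction k with
      | zero =>
        intro _
        rw [hu0, hφ0, htk]
        simp
      | succ k ih =>
        intro hkN
        have ihk := ih (by omega)
        have hex : ∃ v ∈ Icc (u k) 1, φ v = tk (k+1) := by
          have hsub : Icc (u k) 1 ⊆ Icc 0 1 := Icc_subset_Icc (hu01 k).1 le_rfl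
          have hIVT := intermediate_value_Icc (hu01 k).2 (hφcont.mono hsub)
          have hmem : tk (k+1) ∈ Icc (φ (u k)) (φ 1) := by
            rw [ihk, hφ1]
            refine ⟨htkmono k, ?_⟩
            rw [htk]
            simp only
            have hcast : ((k+1:ℕ):ℝ) ≤ (N:ℝ) := by exact_mod_cast hkN
            have hNe : (N:ℝ)*(ε/2) = L := by
              rw [hN, hL]; push_cast; ring
            nlinarith [hεpos]
          obtain ⟨v, hv, hveq⟩ := hIVT hmem
          exact ⟨v, hv, hveq⟩
        rw [hu_succ k, dif_pos hex]
        exact hex.choose_spec.2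
    -- each edge has the same length
    have hterm : ∀ k, k < N → edist (γ (u (k+1))) (γ (u k)) =
        ENNReal.ofReal ((ε/2) * Real.sqrt (1 + (A*ε/2)^2)) := by
      intro k hk
      have h1 := hchar (u k) (hu01 k)
      have h2 := hchar (u (k+1)) (hu01 (k+1))
      rw [h1.2, h2.2, hφu k (le_of_lt hk), hφu (k+1) (by omega)]
      rw [edist_dist, dist_pt2]
      rw [← hr0]
      congr 2
      rcases Nat.even_or_odd k with ⟨q, hq⟩ | ⟨q, hq⟩
      · have e1 : tk k = a + (q:ℝ)*ε := by rw [htk, hq]; push_cast; ring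
        have e2 : tk (k+1) = a + (q:ℝ)*ε + ε/2 := by rw [htk, hq]; push_cast; ring
        have hqm : q < m := by omega
        rw [e1, e2, hgval q, hgmid q hqm]
        ring
      · have e1 : tk k = a + (q:ℝ)*ε + ε/2 := by
          rw [htk, hq]; push_cast; ring
        have e2 : tk (k+1) = a + ((q+1:ℕ):ℝ)*ε := by rw [htk, hq]; push_cast; ring
        have hqm : q < m := by omega
        rw [e1, e2, hgval (q+1), hgmid q hqm]
        push_cast; ring
    -- sum over the chain
    have hsum := eVariationOn.sum_le (f := γ) (n := N) humono (fun k => hu01 k)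
    calc ENNReal.ofReal (L * Real.sqrt (1 + (A*ε/2)^2))
        = ∑ _k ∈ Finset.range N, ENNReal.ofReal ((ε/2) * Real.sqrt (1 + (A*ε/2)^2)) := by
          rw [Finset.sum_const, Finset.card_range, nsmul_eq_mul,
            ← ENNReal.ofReal_natCast N,
            ← ENNReal.ofReal_mul (by positivity : (0:ℝ) ≤ ((N:ℕ):ℝ))]
          congr 1
          rw [hN, hL]
          push_cast; ring
      _ = ∑ k ∈ Finset.range N, edist (γ (u (k+1))) (γ (u k)) := by
          apply Finset.sum_congr rfl
          intro k hk
          rw [hterm k (Finset.mem_range.1 hk)]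
      _ ≤ eVariationOn γ (Icc 0 1) := hsum
  -- Part 4 : numeric assembly
  have hC1v : C₁ = 19683/104720 * A^2 := by
    rw [hC₁]
    simp only [deriv_triCube]
    rw [integral_tcd_sq]; ring
  have hC2v : C₂ = 243/7040 * A^4 := by
    rw [hC₂]
    simp only [deriv_triCube]
    rw [integral_tcd_pow4]; ring
  have hu0le : A^2 * ε^2 ≤ 324/119 := by
    rw [hC2v, hC1v] at hsmall₁
    exact aux_u0_bound hA hεpos (by linarith [hsmall₁])
  have hqu : (A*ε/2)^2 = A^2 * ε^2/4 := by ring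
  set u0 : ℝ := A^2 * ε^2 with hu0def
  have hu0pos : 0 < u0 := by positivity
  have hpos1 : 0 < 1 - 19683/418880 * u0 := by linarith [hu0le]
  set r : ℝ := Real.sqrt (1 + (A*ε/2)^2) with hrdef
  have hr2 : r^2 = 1 + u0/4 := by
    rw [hrdef, Real.sq_sqrt (by positivity), hqu]
  have hr1 : 1 ≤ r := by
    have h1 : Real.sqrt 1 ≤ r :=
      Real.sqrt_le_sqrt (le_add_of_nonneg_right (sq_nonneg (A*ε/2)))
    simpa using h1
  have hkey : 1 ≤ (1 - 19683/418880 * u0) * r := aux_key hu0pos.le hu0le hr1 hr2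
  have hd1 : (intrinsicDist M₁ (x i) (x j)).toReal ≤ L :=
    ENNReal.toReal_le_of_le_ofReal hL0.le hM1up
  have hD2ne : intrinsicDist M₂ (x i) (x j) ≠ ⊤ :=
    ne_top_of_le_ne_top ENNReal.ofReal_ne_top hM2up
  have hd2low : L * r ≤ (intrinsicDist M₂ (x i) (x j)).toReal := by
    have h := hM2low
    rw [ENNReal.ofReal_le_iff_le_toReal hD2ne] at h
    exact h
  set d1 := (intrinsicDist M₁ (x i) (x j)).toReal with hd1def
  set d2 := (intrinsicDist M₂ (x i) (x j)).toReal with hd2def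
  have hd20 : 0 ≤ d2 := ENNReal.toReal_nonneg
  have hLr : L ≤ L * r := by
    calc L = L * 1 := (mul_one L).symm
      _ ≤ L * r := mul_le_mul_of_nonneg_left hr1 hL0.le
  have hd12 : d1 ≤ d2 := le_trans hd1 (le_trans hLr hd2low)
  have hmaxd : max d1 d2 = d2 := max_eq_right hd12
  have habs : d2 - d1 ≤ 2 * max |δ - d1| |δ - d2| := by
    have h1 : d2 - d1 ≤ |δ - d1| + |δ - d2| := by
      linarith [le_abs_self (δ - d1), neg_abs_le (δ - d2)]
    have h2 := le_max_left |δ - d1| |δ - d2|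
    have h3 := le_max_right |δ - d1| |δ - d2|
    linarith
  have hd1le : d1 ≤ d2 - 19683/418880 * (u0 * d2) := by
    have step : L ≤ (1 - 19683/418880*u0) * (L * r) := by
      calc L = L * 1 := (mul_one L).symm
        _ ≤ L * ((1 - 19683/418880*u0) * r) := mul_le_mul_of_nonneg_left hkey hL0.le
        _ = (1 - 19683/418880*u0) * (L * r) := by ring
    have step2 : (1 - 19683/418880*u0) * (L*r) ≤ (1 - 19683/418880*u0) * d2 :=
      mul_le_mul_of_nonneg_left hd2low hpos1.le
    have expand : (1 - 19683/418880*u0) * d2 = d2 - 19683/418880 * (u0 * d2) := by ring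
    linarith [le_trans hd1 (le_trans step step2), expand.le, expand.ge]
  rw [hmaxd, hC1v]
  have e1 : 19683/104720 * A^2 / 8 * ε^2 * d2 = 19683/418880 * (u0 * d2) / 2 := by
    rw [hu0def]; ring
  have e2 : 19683/418880 * (u0 * d2) ≤ d2 - d1 := by linarith [hd1le]
  rw [e1]
  linarith [habs, e2]
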